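/- Let Y be a Hopf coquasigroup over a field F and let D, B be Hopf coquasigroups equipped with surjective Hopf coquasigroup morphisms p_D : Y → D and p_B : Y → B such that Y cofactorizes as Y = D•B. Then the linear map Ω = v_Y∘u_Y⁻¹ : D⊗B → B⊗D is a monoidal codistributive law of D over B. -/
import Mathlib


open TensorProduct LinearMap

noncomputable section

universe u

/-- A Hopf quasigroup structure on an `F`-module `H`. -/
structure HopfQG (F : Type u) [Field F] (H : Type u) [AddCommGroup H] [Module F H] where
  eta : F →ₗ[F] H
  mu : H ⊗[F] H →ₗ[F] H
  eps : H →ₗ[F] F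
  delta : H →ₗ[F] H ⊗[F] H
  lam : H →ₗ[F] H
  mul_one : mu ∘ₗ lTensor H eta ∘ₗ (TensorProduct.rid F H).symm.toLinearMap = LinearMap.id
  one_mul : mu ∘ₗ rTensor H eta ∘ₗ (TensorProduct.lid F H).symm.toLinearMap = LinearMap.id
  counit_left : (TensorProduct.lid F H).toLinearMap ∘ₗ rTensor H eps ∘ₗ delta = LinearMap.id
  counit_right : (TensorProduct.rid F H).toLinearMap ∘ₗ lTensor H eps ∘ₗ delta = LinearMap.id
  coassoc : (TensorProduct.assoc F H H H).toLinearMap ∘ₗ rTensor H delta ∘ₗ delta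
      = lTensor H delta ∘ₗ delta
  eps_eta : eps ∘ₗ eta = LinearMap.id
  eps_mu : eps ∘ₗ mu = (TensorProduct.lid F F).toLinearMap ∘ₗ TensorProduct.map eps eps
  delta_eta : delta ∘ₗ eta
      = TensorProduct.map eta eta ∘ₗ (TensorProduct.lid F F).symm.toLinearMap
  delta_mu : delta ∘ₗ mu
      = TensorProduct.map mu mu ∘ₗ (TensorProduct.tensorTensorTensorComm F H H H H).toLinearMap
          ∘ₗ TensorProduct.map delta delta
  antipode_l1 : mu ∘ₗ TensorProduct.map lam mu ∘ₗ (TensorProduct.assoc F H H H).toLinearMap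
        ∘ₗ rTensor H delta
      = (TensorProduct.lid F H).toLinearMap ∘ₗ rTensor H eps
  antipode_l2 : mu ∘ₗ lTensor H mu ∘ₗ lTensor H (rTensor H lam)
        ∘ₗ (TensorProduct.assoc F H H H).toLinearMap ∘ₗ rTensor H delta
      = (TensorProduct.lid F H).toLinearMap ∘ₗ rTensor H eps
  antipode_r1 : mu ∘ₗ rTensor H mu ∘ₗ (TensorProduct.assoc F H H H).symm.toLinearMap
        ∘ₗ lTensor H (rTensor H lam) ∘ₗ lTensor H delta
      = (TensorProduct.rid F H).toLinearMap ∘ₗ lTensor H eps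
  antipode_r2 : mu ∘ₗ TensorProduct.map mu lam ∘ₗ (TensorProduct.assoc F H H H).symm.toLinearMap
        ∘ₗ lTensor H delta
      = (TensorProduct.rid F H).toLinearMap ∘ₗ lTensor H eps

section QGDefs

variable (F : Type u) [Field F]
variable {H : Type u} [AddCommGroup H] [Module F H]
variable {A : Type u} [AddCommGroup A] [Module F A]
variable {X : Type u} [AddCommGroup X] [Module F X]

/-- The tensor-product coproduct `δ_{H⊗A} = (H⊗c_{H,A}⊗A)∘(δ_H⊗δ_A)`. -/
def tensorDelta (dH : H →ₗ[F] H ⊗[F] H) (dA : A →ₗ[F] A ⊗[F] A) :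
    H ⊗[F] A →ₗ[F] (H ⊗[F] A) ⊗[F] (H ⊗[F] A) :=
  (TensorProduct.tensorTensorTensorComm F H H A A).toLinearMap ∘ₗ TensorProduct.map dH dA

/-- The tensor-product counit `ε_H⊗ε_A`. -/
def tensorEps (eH : H →ₗ[F] F) (eA : A →ₗ[F] F) : H ⊗[F] A →ₗ[F] F :=
  (TensorProduct.lid F F).toLinearMap ∘ₗ TensorProduct.map eH eA

/-- The tensor-product unit `η_H⊗η_A`. -/
def tensorEta (uH : F →ₗ[F] H) (uA : F →ₗ[F] A) : F →ₗ[F] H ⊗[F] A :=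
  TensorProduct.map uH uA ∘ₗ (TensorProduct.lid F F).symm.toLinearMap

/-- The tensor-product multiplication `(μ_H⊗μ_A)∘(H⊗c_{A,H}⊗A)`. -/
def tensorMu (mH : H ⊗[F] H →ₗ[F] H) (mA : A ⊗[F] A →ₗ[F] A) :
    (H ⊗[F] A) ⊗[F] (H ⊗[F] A) →ₗ[F] H ⊗[F] A :=
  TensorProduct.map mH mA ∘ₗ (TensorProduct.tensorTensorTensorComm F H A H A).toLinearMap

/-- `Ψ : H⊗A → A⊗H` is a distributive law of the Hopf quasigroup `H` over `A`. -/
def IsDistLaw (QH : HopfQG F H) (QA : HopfQG F A) (Ψ : H ⊗[F] A →ₗ[F] A ⊗[F] H) : Prop :=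
  (Ψ ∘ₗ lTensor H QA.mu ∘ₗ TensorProduct.map QH.lam (rTensor A QA.lam)
      = rTensor H QA.mu ∘ₗ (TensorProduct.assoc F A A H).symm.toLinearMap
        ∘ₗ lTensor A Ψ ∘ₗ (TensorProduct.assoc F A H A).toLinearMap
        ∘ₗ rTensor A Ψ ∘ₗ (TensorProduct.assoc F H A A).symm.toLinearMap
        ∘ₗ TensorProduct.map QH.lam (rTensor A QA.lam))
  ∧ (Ψ ∘ₗ rTensor A QH.mu ∘ₗ TensorProduct.map (lTensor H QH.lam) QA.lam
      = lTensor A QH.mu ∘ₗ (TensorProduct.assoc F A H H).toLinearMap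
        ∘ₗ rTensor H Ψ ∘ₗ (TensorProduct.assoc F H A H).symm.toLinearMap
        ∘ₗ lTensor H Ψ ∘ₗ (TensorProduct.assoc F H H A).toLinearMap
        ∘ₗ TensorProduct.map (lTensor H QH.lam) QA.lam)
  ∧ (Ψ ∘ₗ lTensor H QA.eta ∘ₗ (TensorProduct.rid F H).symm.toLinearMap
      = rTensor H QA.eta ∘ₗ (TensorProduct.lid F H).symm.toLinearMap)
  ∧ (Ψ ∘ₗ rTensor A QH.eta ∘ₗ (TensorProduct.lid F A).symm.toLinearMap
      = lTensor A QH.eta ∘ₗ (TensorProduct.rid F A).symm.toLinearMap)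

/-- `Ψ` is a comonoidal distributive law of `H` over `A`. -/
def IsComonoidalDL (QH : HopfQG F H) (QA : HopfQG F A) (Ψ : H ⊗[F] A →ₗ[F] A ⊗[F] H) : Prop :=
  IsDistLaw F QH QA Ψ
  ∧ (tensorDelta F QA.delta QH.delta ∘ₗ Ψ
      = TensorProduct.map Ψ Ψ ∘ₗ tensorDelta F QH.delta QA.delta)
  ∧ (tensorEps F QA.eps QH.eps ∘ₗ Ψ = tensorEps F QH.eps QA.eps)

/-- `Ψ` is an a-comonoidal distributive law of `H` over `A`. -/
def IsAComonoidalDL (QH : HopfQG F H) (QA : HopfQG F A) (Ψ : H ⊗[F] A →ₗ[F] A ⊗[F] H) : Prop :=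
  IsComonoidalDL F QH QA Ψ
  ∧ (lTensor A QH.mu ∘ₗ (TensorProduct.assoc F A H H).toLinearMap
        ∘ₗ TensorProduct.map Ψ QH.mu
        ∘ₗ (TensorProduct.assoc F H A (H ⊗[F] H)).symm.toLinearMap
        ∘ₗ lTensor H (TensorProduct.assoc F A H H).toLinearMap
        ∘ₗ lTensor H (rTensor H Ψ)
        ∘ₗ lTensor H (TensorProduct.assoc F H A H).symm.toLinearMap
        ∘ₗ (TensorProduct.assoc F H H (A ⊗[F] H)).toLinearMap
        ∘ₗ rTensor (A ⊗[F] H) (rTensor H QH.lam ∘ₗ QH.delta)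
      = (TensorProduct.lid F (A ⊗[F] H)).toLinearMap ∘ₗ rTensor (A ⊗[F] H) QH.eps)
  ∧ (lTensor A QH.mu ∘ₗ (TensorProduct.assoc F A H H).toLinearMap
        ∘ₗ TensorProduct.map Ψ QH.mu
        ∘ₗ (TensorProduct.assoc F H A (H ⊗[F] H)).symm.toLinearMap
        ∘ₗ lTensor H (TensorProduct.assoc F A H H).toLinearMap
        ∘ₗ lTensor H (rTensor H Ψ)
        ∘ₗ lTensor H (TensorProduct.assoc F H A H).symm.toLinearMap
        ∘ₗ (TensorProduct.assoc F H H (A ⊗[F] H)).toLinearMap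
        ∘ₗ rTensor (A ⊗[F] H) (lTensor H QH.lam ∘ₗ QH.delta)
      = (TensorProduct.lid F (A ⊗[F] H)).toLinearMap ∘ₗ rTensor (A ⊗[F] H) QH.eps)
  ∧ (rTensor H QA.mu ∘ₗ (TensorProduct.assoc F A A H).symm.toLinearMap
        ∘ₗ TensorProduct.map QA.mu Ψ
        ∘ₗ (TensorProduct.assoc F A A (H ⊗[F] A)).symm.toLinearMap
        ∘ₗ lTensor A (TensorProduct.assoc F A H A).toLinearMap
        ∘ₗ lTensor A (rTensor A Ψ)
        ∘ₗ lTensor A (TensorProduct.assoc F H A A).symm.toLinearMap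
        ∘ₗ (TensorProduct.assoc F A H (A ⊗[F] A)).toLinearMap
        ∘ₗ lTensor (A ⊗[F] H) (rTensor A QA.lam ∘ₗ QA.delta)
      = (TensorProduct.rid F (A ⊗[F] H)).toLinearMap ∘ₗ lTensor (A ⊗[F] H) QA.eps)
  ∧ (rTensor H QA.mu ∘ₗ (TensorProduct.assoc F A A H).symm.toLinearMap
        ∘ₗ TensorProduct.map QA.mu Ψ
        ∘ₗ (TensorProduct.assoc F A A (H ⊗[F] A)).symm.toLinearMap
        ∘ₗ lTensor A (TensorProduct.assoc F A H A).toLinearMap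
        ∘ₗ lTensor A (rTensor A Ψ)
        ∘ₗ lTensor A (TensorProduct.assoc F H A A).symm.toLinearMap
        ∘ₗ (TensorProduct.assoc F A H (A ⊗[F] A)).toLinearMap
        ∘ₗ lTensor (A ⊗[F] H) (lTensor A QA.lam ∘ₗ QA.delta)
      = (TensorProduct.rid F (A ⊗[F] H)).toLinearMap ∘ₗ lTensor (A ⊗[F] H) QA.eps)

/-- The wreath product multiplication `(μ_A⊗μ_H)∘(A⊗Ψ⊗H)` on `A⊗H`. -/
def wreathMul (QA : HopfQG F A) (QH : HopfQG F H) (Ψ : H ⊗[F] A →ₗ[F] A ⊗[F] H) :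
    (A ⊗[F] H) ⊗[F] (A ⊗[F] H) →ₗ[F] A ⊗[F] H :=
  TensorProduct.map QA.mu QH.mu ∘ₗ (TensorProduct.assoc F A A (H ⊗[F] H)).symm.toLinearMap
    ∘ₗ lTensor A ((TensorProduct.assoc F A H H).toLinearMap ∘ₗ rTensor H Ψ
        ∘ₗ (TensorProduct.assoc F H A H).symm.toLinearMap)
    ∘ₗ (TensorProduct.assoc F A H (A ⊗[F] H)).toLinearMap

/-- The wreath product antipode `Ψ∘(λ_H⊗λ_A)∘c_{A,H}`. -/
def wreathLam (QA : HopfQG F A) (QH : HopfQG F H) (Ψ : H ⊗[F] A →ₗ[F] A ⊗[F] H) :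
    A ⊗[F] H →ₗ[F] A ⊗[F] H :=
  Ψ ∘ₗ TensorProduct.map QH.lam QA.lam ∘ₗ (TensorProduct.comm F A H).toLinearMap

/-- `f` is a morphism of Hopf quasigroups. -/
def IsHopfQGMor (Q1 : HopfQG F H) (Q2 : HopfQG F X) (f : H →ₗ[F] X) : Prop :=
  f ∘ₗ Q1.eta = Q2.eta
  ∧ f ∘ₗ Q1.mu = Q2.mu ∘ₗ TensorProduct.map f f
  ∧ Q2.eps ∘ₗ f = Q1.eps
  ∧ TensorProduct.map f f ∘ₗ Q1.delta = Q2.delta ∘ₗ f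

/-- `ω_X = μ_X∘(i_A⊗i_H)`. -/
def omegaMap (QX : HopfQG F X) (iA : A →ₗ[F] X) (iH : H →ₗ[F] X) : A ⊗[F] H →ₗ[F] X :=
  QX.mu ∘ₗ TensorProduct.map iA iH

/-- `θ_X = μ_X∘(i_H⊗i_A)`. -/
def thetaMap (QX : HopfQG F X) (iH : H →ₗ[F] X) (iA : A →ₗ[F] X) : H ⊗[F] A →ₗ[F] X :=
  QX.mu ∘ₗ TensorProduct.map iH iA

/-- `X` factorizes as `X = AH`. -/
def Factorizes (QX : HopfQG F X) (QH : HopfQG F H) (QA : HopfQG F A)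
    (iH : H →ₗ[F] X) (iA : A →ₗ[F] X) : Prop :=
  Function.Bijective (omegaMap F QX iA iH)
  ∧ (QX.mu ∘ₗ rTensor X (omegaMap F QX iA iH)
      = QX.mu ∘ₗ TensorProduct.map iA (QX.mu ∘ₗ rTensor X iH)
          ∘ₗ (TensorProduct.assoc F A H X).toLinearMap)
  ∧ (QX.mu ∘ₗ lTensor X (omegaMap F QX iA iH)
      = QX.mu ∘ₗ TensorProduct.map (QX.mu ∘ₗ lTensor X iA) iH
          ∘ₗ (TensorProduct.assoc F X A H).symm.toLinearMap)
  ∧ (QX.mu ∘ₗ rTensor X (thetaMap F QX iH iA ∘ₗ TensorProduct.map QH.lam QA.lam)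
      = QX.mu ∘ₗ TensorProduct.map (iH ∘ₗ QH.lam) (QX.mu ∘ₗ rTensor X (iA ∘ₗ QA.lam))
          ∘ₗ (TensorProduct.assoc F H A X).toLinearMap)
  ∧ (QX.mu ∘ₗ lTensor X (thetaMap F QX iH iA ∘ₗ TensorProduct.map QH.lam QA.lam)
      = QX.mu ∘ₗ TensorProduct.map (QX.mu ∘ₗ lTensor X (iH ∘ₗ QH.lam)) (iA ∘ₗ QA.lam)
          ∘ₗ (TensorProduct.assoc F X H A).symm.toLinearMap)

end QGDefs

/-- A Hopf coquasigroup structure on an `F`-module `D`. -/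
structure HopfCoQG (F : Type u) [Field F] (D : Type u) [AddCommGroup D] [Module F D] where
  eta : F →ₗ[F] D
  mu : D ⊗[F] D →ₗ[F] D
  eps : D →ₗ[F] F
  delta : D →ₗ[F] D ⊗[F] D
  lam : D →ₗ[F] D
  mul_one : mu ∘ₗ lTensor D eta ∘ₗ (TensorProduct.rid F D).symm.toLinearMap = LinearMap.id
  one_mul : mu ∘ₗ rTensor D eta ∘ₗ (TensorProduct.lid F D).symm.toLinearMap = LinearMap.id
  mul_assoc : mu ∘ₗ rTensor D mu
      = mu ∘ₗ lTensor D mu ∘ₗ (TensorProduct.assoc F D D D).toLinearMap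
  counit_left : (TensorProduct.lid F D).toLinearMap ∘ₗ rTensor D eps ∘ₗ delta = LinearMap.id
  counit_right : (TensorProduct.rid F D).toLinearMap ∘ₗ lTensor D eps ∘ₗ delta = LinearMap.id
  eps_eta : eps ∘ₗ eta = LinearMap.id
  eps_mu : eps ∘ₗ mu = (TensorProduct.lid F F).toLinearMap ∘ₗ TensorProduct.map eps eps
  delta_eta : delta ∘ₗ eta
      = TensorProduct.map eta eta ∘ₗ (TensorProduct.lid F F).symm.toLinearMap
  delta_mu : delta ∘ₗ mu
      = TensorProduct.map mu mu ∘ₗ (TensorProduct.tensorTensorTensorComm F D D D D).toLinearMap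
          ∘ₗ TensorProduct.map delta delta
  antipode_l1 : lTensor D mu ∘ₗ (TensorProduct.assoc F D D D).toLinearMap
        ∘ₗ TensorProduct.map delta lam ∘ₗ delta
      = lTensor D eta ∘ₗ (TensorProduct.rid F D).symm.toLinearMap
  antipode_l2 : lTensor D mu ∘ₗ lTensor D (rTensor D lam)
        ∘ₗ (TensorProduct.assoc F D D D).toLinearMap ∘ₗ rTensor D delta ∘ₗ delta
      = lTensor D eta ∘ₗ (TensorProduct.rid F D).symm.toLinearMap
  antipode_r1 : rTensor D mu ∘ₗ (TensorProduct.assoc F D D D).symm.toLinearMap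
        ∘ₗ TensorProduct.map lam delta ∘ₗ delta
      = rTensor D eta ∘ₗ (TensorProduct.lid F D).symm.toLinearMap
  antipode_r2 : rTensor D mu ∘ₗ (TensorProduct.assoc F D D D).symm.toLinearMap
        ∘ₗ lTensor D (rTensor D lam) ∘ₗ lTensor D delta ∘ₗ delta
      = rTensor D eta ∘ₗ (TensorProduct.lid F D).symm.toLinearMap

section CoQGDefs

variable (F : Type u) [Field F]
variable {D : Type u} [AddCommGroup D] [Module F D]
variable {B : Type u} [AddCommGroup B] [Module F B]
variable {Y : Type u} [AddCommGroup Y] [Module F Y]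

/-- `Ω : D⊗B → B⊗D` is a codistributive law of the Hopf coquasigroup `D` over `B`. -/
def IsCoDistLaw (QD : HopfCoQG F D) (QB : HopfCoQG F B) (Ω : D ⊗[F] B →ₗ[F] B ⊗[F] D) : Prop :=
  (lTensor B (TensorProduct.map QB.lam QD.lam) ∘ₗ (TensorProduct.assoc F B B D).toLinearMap
      ∘ₗ rTensor D QB.delta ∘ₗ Ω
    = lTensor B (TensorProduct.map QB.lam QD.lam) ∘ₗ lTensor B Ω
        ∘ₗ (TensorProduct.assoc F B D B).toLinearMap ∘ₗ rTensor B Ω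
        ∘ₗ (TensorProduct.assoc F D B B).symm.toLinearMap ∘ₗ lTensor D QB.delta)
  ∧ (rTensor D (TensorProduct.map QB.lam QD.lam) ∘ₗ (TensorProduct.assoc F B D D).symm.toLinearMap
      ∘ₗ lTensor B QD.delta ∘ₗ Ω
    = rTensor D (TensorProduct.map QB.lam QD.lam) ∘ₗ rTensor D Ω
        ∘ₗ (TensorProduct.assoc F D B D).symm.toLinearMap ∘ₗ lTensor D Ω
        ∘ₗ (TensorProduct.assoc F D D B).toLinearMap ∘ₗ rTensor B QD.delta)
  ∧ ((TensorProduct.lid F D).toLinearMap ∘ₗ rTensor D QB.eps ∘ₗ Ω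
      = (TensorProduct.rid F D).toLinearMap ∘ₗ lTensor D QB.eps)
  ∧ ((TensorProduct.rid F B).toLinearMap ∘ₗ lTensor B QD.eps ∘ₗ Ω
      = (TensorProduct.lid F B).toLinearMap ∘ₗ rTensor B QD.eps)

/-- `Ω` is a monoidal codistributive law of `D` over `B`. -/
def IsMonoidalCoDL (QD : HopfCoQG F D) (QB : HopfCoQG F B) (Ω : D ⊗[F] B →ₗ[F] B ⊗[F] D) :
    Prop :=
  IsCoDistLaw F QD QB Ω
  ∧ (Ω ∘ₗ tensorMu F QD.mu QB.mu = tensorMu F QB.mu QD.mu ∘ₗ TensorProduct.map Ω Ω)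
  ∧ (Ω ∘ₗ tensorEta F QD.eta QB.eta = tensorEta F QB.eta QD.eta)

/-- `Ω` is an a-monoidal codistributive law of `D` over `B`. -/
def IsAMonoidalCoDL (QD : HopfCoQG F D) (QB : HopfCoQG F B) (Ω : D ⊗[F] B →ₗ[F] B ⊗[F] D) :
    Prop :=
  IsMonoidalCoDL F QD QB Ω
  ∧ (lTensor D (lTensor B (QD.mu ∘ₗ lTensor D QD.lam))
        ∘ₗ lTensor D (TensorProduct.assoc F B D D).toLinearMap
        ∘ₗ lTensor D (rTensor D Ω)
        ∘ₗ lTensor D (TensorProduct.assoc F D B D).symm.toLinearMap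
        ∘ₗ (TensorProduct.assoc F D D (B ⊗[F] D)).toLinearMap
        ∘ₗ TensorProduct.map QD.delta Ω
        ∘ₗ (TensorProduct.assoc F D D B).toLinearMap
        ∘ₗ rTensor B QD.delta
      = lTensor D (lTensor B QD.eta ∘ₗ (TensorProduct.rid F B).symm.toLinearMap))
  ∧ (lTensor D (lTensor B (QD.mu ∘ₗ rTensor D QD.lam))
        ∘ₗ lTensor D (TensorProduct.assoc F B D D).toLinearMap
        ∘ₗ lTensor D (rTensor D Ω)
        ∘ₗ lTensor D (TensorProduct.assoc F D B D).symm.toLinearMap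
        ∘ₗ (TensorProduct.assoc F D D (B ⊗[F] D)).toLinearMap
        ∘ₗ TensorProduct.map QD.delta Ω
        ∘ₗ (TensorProduct.assoc F D D B).toLinearMap
        ∘ₗ rTensor B QD.delta
      = lTensor D (lTensor B QD.eta ∘ₗ (TensorProduct.rid F B).symm.toLinearMap))
  ∧ (rTensor (D ⊗[F] B) (QB.mu ∘ₗ lTensor B QB.lam)
        ∘ₗ (TensorProduct.assoc F B B (D ⊗[F] B)).symm.toLinearMap
        ∘ₗ lTensor B (TensorProduct.assoc F B D B).toLinearMap
        ∘ₗ lTensor B (rTensor B Ω)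
        ∘ₗ lTensor B (TensorProduct.assoc F D B B).symm.toLinearMap
        ∘ₗ (TensorProduct.assoc F B D (B ⊗[F] B)).toLinearMap
        ∘ₗ TensorProduct.map Ω QB.delta
        ∘ₗ (TensorProduct.assoc F D B B).symm.toLinearMap
        ∘ₗ lTensor D QB.delta
      = rTensor (D ⊗[F] B) QB.eta ∘ₗ (TensorProduct.lid F (D ⊗[F] B)).symm.toLinearMap)
  ∧ (rTensor (D ⊗[F] B) (QB.mu ∘ₗ rTensor B QB.lam)
        ∘ₗ (TensorProduct.assoc F B B (D ⊗[F] B)).symm.toLinearMap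
        ∘ₗ lTensor B (TensorProduct.assoc F B D B).toLinearMap
        ∘ₗ lTensor B (rTensor B Ω)
        ∘ₗ lTensor B (TensorProduct.assoc F D B B).symm.toLinearMap
        ∘ₗ (TensorProduct.assoc F B D (B ⊗[F] B)).toLinearMap
        ∘ₗ TensorProduct.map Ω QB.delta
        ∘ₗ (TensorProduct.assoc F D B B).symm.toLinearMap
        ∘ₗ lTensor D QB.delta
      = rTensor (D ⊗[F] B) QB.eta ∘ₗ (TensorProduct.lid F (D ⊗[F] B)).symm.toLinearMap)

/-- The wreath coproduct `(D⊗Ω⊗B)∘(δ_D⊗δ_B)` on `D⊗B`. -/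
def wreathDelta (QD : HopfCoQG F D) (QB : HopfCoQG F B) (Ω : D ⊗[F] B →ₗ[F] B ⊗[F] D) :
    D ⊗[F] B →ₗ[F] (D ⊗[F] B) ⊗[F] (D ⊗[F] B) :=
  (TensorProduct.assoc F D B (D ⊗[F] B)).symm.toLinearMap
    ∘ₗ lTensor D ((TensorProduct.assoc F B D B).toLinearMap ∘ₗ rTensor B Ω
        ∘ₗ (TensorProduct.assoc F D B B).symm.toLinearMap)
    ∘ₗ (TensorProduct.assoc F D D (B ⊗[F] B)).toLinearMap
    ∘ₗ TensorProduct.map QD.delta QB.delta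

/-- The wreath coproduct antipode `c_{B,D}∘(λ_B⊗λ_D)∘Ω`. -/
def wreathCoLam (QD : HopfCoQG F D) (QB : HopfCoQG F B) (Ω : D ⊗[F] B →ₗ[F] B ⊗[F] D) :
    D ⊗[F] B →ₗ[F] D ⊗[F] B :=
  (TensorProduct.comm F B D).toLinearMap ∘ₗ TensorProduct.map QB.lam QD.lam ∘ₗ Ω

/-- `f` is a morphism of Hopf coquasigroups. -/
def IsHopfCoQGMor (Q1 : HopfCoQG F D) (Q2 : HopfCoQG F B) (f : D →ₗ[F] B) : Prop :=
  f ∘ₗ Q1.eta = Q2.eta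
  ∧ f ∘ₗ Q1.mu = Q2.mu ∘ₗ TensorProduct.map f f
  ∧ Q2.eps ∘ₗ f = Q1.eps
  ∧ TensorProduct.map f f ∘ₗ Q1.delta = Q2.delta ∘ₗ f

/-- `u_Y = (p_D⊗p_B)∘δ_Y`. -/
def uMap (QY : HopfCoQG F Y) (pD : Y →ₗ[F] D) (pB : Y →ₗ[F] B) : Y →ₗ[F] D ⊗[F] B :=
  TensorProduct.map pD pB ∘ₗ QY.delta

/-- `v_Y = (p_B⊗p_D)∘δ_Y`. -/
def vMap (QY : HopfCoQG F Y) (pB : Y →ₗ[F] B) (pD : Y →ₗ[F] D) : Y →ₗ[F] B ⊗[F] D :=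
  TensorProduct.map pB pD ∘ₗ QY.delta

/-- `Y` cofactorizes as `Y = D•B`. -/
def Cofactorizes (QY : HopfCoQG F Y) (QD : HopfCoQG F D) (QB : HopfCoQG F B)
    (pD : Y →ₗ[F] D) (pB : Y →ₗ[F] B) : Prop :=
  Function.Bijective (uMap F QY pD pB)
  ∧ (lTensor Y (uMap F QY pD pB) ∘ₗ QY.delta
      = (TensorProduct.assoc F Y D B).toLinearMap
          ∘ₗ TensorProduct.map (lTensor Y pD ∘ₗ QY.delta) pB ∘ₗ QY.delta)
  ∧ (rTensor Y (uMap F QY pD pB) ∘ₗ QY.delta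
      = (TensorProduct.assoc F D B Y).symm.toLinearMap
          ∘ₗ TensorProduct.map pD (rTensor Y pB ∘ₗ QY.delta) ∘ₗ QY.delta)
  ∧ (lTensor Y (TensorProduct.map QB.lam QD.lam ∘ₗ vMap F QY pB pD) ∘ₗ QY.delta
      = (TensorProduct.assoc F Y B D).toLinearMap
          ∘ₗ TensorProduct.map (lTensor Y (QB.lam ∘ₗ pB) ∘ₗ QY.delta) (QD.lam ∘ₗ pD)
          ∘ₗ QY.delta)
  ∧ (rTensor Y (TensorProduct.map QB.lam QD.lam ∘ₗ vMap F QY pB pD) ∘ₗ QY.delta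
      = (TensorProduct.assoc F B D Y).symm.toLinearMap
          ∘ₗ TensorProduct.map (QB.lam ∘ₗ pB) (rTensor Y (QD.lam ∘ₗ pD) ∘ₗ QY.delta)
          ∘ₗ QY.delta)

end CoQGDefs

/-- Composition with a surjective map is injective on linear maps. -/
private lemma comp_cancel_surj {F : Type u} [Field F] {M N P : Type u}
    [AddCommGroup M] [Module F M] [AddCommGroup N] [Module F N] [AddCommGroup P] [Module F P]
    (f : M →ₗ[F] N) (hf : Function.Surjective f) {g h : N →ₗ[F] P}
    (H : g ∘ₗ f = h ∘ₗ f) : g = h := by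
  ext n
  obtain ⟨m, rfl⟩ := hf n
  simpa using DFunLike.congr_fun H m

set_option maxHeartbeats 2000000 in
/-- if `Y` cofactorizes as `Y = D•B` then `Ω = v_Y∘u_Y⁻¹` is a monoidal
codistributive law of `D` over `B`. -/
theorem stmt10_cofactorization_gives_monoidal_codistributive_law
    {F : Type u} [Field F] {Y D B : Type u}
    [AddCommGroup Y] [Module F Y] [AddCommGroup D] [Module F D] [AddCommGroup B] [Module F B]
    (QY : HopfCoQG F Y) (QD : HopfCoQG F D) (QB : HopfCoQG F B)
    (pD : Y →ₗ[F] D) (pB : Y →ₗ[F] B)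
    (hpD : Function.Surjective pD) (hpB : Function.Surjective pB)
    (hmD : IsHopfCoQGMor F QY QD pD) (hmB : IsHopfCoQGMor F QY QB pB)
    (hcof : Cofactorizes F QY QD QB pD pB) :
    IsMonoidalCoDL F QD QB
      (vMap F QY pB pD ∘ₗ (LinearEquiv.ofBijective (uMap F QY pD pB) hcof.1).symm.toLinearMap) := by
  set u := uMap F QY pD pB with hud
  set v := vMap F QY pB pD with hvd
  set Ω := v ∘ₗ (LinearEquiv.ofBijective u hcof.1).symm.toLinearMap with hOd
  have hu : Function.Surjective u := hcof.1.2
  have husplit : u = TensorProduct.map pD pB ∘ₗ QY.delta := by rw [hud]; rfl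
  have hvsplit : v = TensorProduct.map pB pD ∘ₗ QY.delta := by rw [hvd]; rfl
  have hes : (LinearEquiv.ofBijective u hcof.1).symm.toLinearMap ∘ₗ u = LinearMap.id := by
    ext y
    simp only [LinearMap.comp_apply, LinearEquiv.coe_coe, LinearMap.id_coe, id_eq]
    exact (LinearEquiv.ofBijective u hcof.1).symm_apply_apply y
  have hOu : Ω ∘ₗ u = v := by
    rw [hOd, LinearMap.comp_assoc, hes, LinearMap.comp_id]
  -- cofactorization conditions, restated with `u`, `v`
  have C2 : lTensor Y u ∘ₗ QY.delta
      = (TensorProduct.assoc F Y D B).toLinearMap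
          ∘ₗ TensorProduct.map (lTensor Y pD ∘ₗ QY.delta) pB ∘ₗ QY.delta := hcof.2.1
  have C3 : rTensor Y u ∘ₗ QY.delta
      = (TensorProduct.assoc F D B Y).symm.toLinearMap
          ∘ₗ TensorProduct.map pD (rTensor Y pB ∘ₗ QY.delta) ∘ₗ QY.delta := hcof.2.2.1
  have C4 : lTensor Y (TensorProduct.map QB.lam QD.lam ∘ₗ v) ∘ₗ QY.delta
      = (TensorProduct.assoc F Y B D).toLinearMap
          ∘ₗ TensorProduct.map (lTensor Y (QB.lam ∘ₗ pB) ∘ₗ QY.delta) (QD.lam ∘ₗ pD)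
          ∘ₗ QY.delta := hcof.2.2.2.1
  have C5 : rTensor Y (TensorProduct.map QB.lam QD.lam ∘ₗ v) ∘ₗ QY.delta
      = (TensorProduct.assoc F B D Y).symm.toLinearMap
          ∘ₗ TensorProduct.map (QB.lam ∘ₗ pB) (rTensor Y (QD.lam ∘ₗ pD) ∘ₗ QY.delta)
          ∘ₗ QY.delta := hcof.2.2.2.2
  -- plumbing lemmas
  have e2p : rTensor (D ⊗[F] B) pB ∘ₗ (TensorProduct.assoc F Y D B).toLinearMap
        ∘ₗ TensorProduct.map (lTensor Y pD) pB
      = (TensorProduct.assoc F B D B).toLinearMap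
        ∘ₗ TensorProduct.map (TensorProduct.map pB pD) pB := by
    ext x y z; simp
  have e2p' : rTensor (D ⊗[F] B) pD ∘ₗ (TensorProduct.assoc F Y D B).toLinearMap
        ∘ₗ TensorProduct.map (lTensor Y pD) pB
      = (TensorProduct.assoc F D D B).toLinearMap
        ∘ₗ TensorProduct.map (TensorProduct.map pD pD) pB := by
    ext x y z; simp
  have e3p : lTensor (D ⊗[F] B) pB ∘ₗ (TensorProduct.assoc F D B Y).symm.toLinearMap
        ∘ₗ TensorProduct.map pD (rTensor Y pB)
      = (TensorProduct.assoc F D B B).symm.toLinearMap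
        ∘ₗ TensorProduct.map pD (TensorProduct.map pB pB) := by
    ext x y z; simp
  have e3p' : lTensor (D ⊗[F] B) pD ∘ₗ (TensorProduct.assoc F D B Y).symm.toLinearMap
        ∘ₗ TensorProduct.map pD (rTensor Y pB)
      = (TensorProduct.assoc F D B D).symm.toLinearMap
        ∘ₗ TensorProduct.map pD (TensorProduct.map pB pD) := by
    ext x y z; simp
  -- the four "E" identities (consequences of `C2`–`C5`)
  have E2e : ∀ z : Y, (TensorProduct.assoc F B D B).toLinearMap
        (TensorProduct.map (TensorProduct.map pB pD) pB (rTensor Y QY.delta (QY.delta z)))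
      = TensorProduct.map pB u (QY.delta z) := by
    intro z
    have h1 := DFunLike.congr_fun C2 z
    rw [show TensorProduct.map (lTensor Y pD ∘ₗ QY.delta) pB
        = TensorProduct.map (lTensor Y pD) pB ∘ₗ rTensor Y QY.delta from
      (LinearMap.map_comp_rTensor _ _ _ _).symm] at h1
    simp only [LinearMap.comp_apply] at h1
    have h2 := DFunLike.congr_fun e2p (rTensor Y QY.delta (QY.delta z))
    simp only [LinearMap.comp_apply] at h2
    have h3 := DFunLike.congr_fun (rTensor_comp_lTensor _ pB u) (QY.delta z)
    simp only [LinearMap.comp_apply] at h3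
    rw [← h2, ← h1, h3]
  have E2e' : ∀ z : Y, (TensorProduct.assoc F D D B).toLinearMap
        (TensorProduct.map (TensorProduct.map pD pD) pB (rTensor Y QY.delta (QY.delta z)))
      = TensorProduct.map pD u (QY.delta z) := by
    intro z
    have h1 := DFunLike.congr_fun C2 z
    rw [show TensorProduct.map (lTensor Y pD ∘ₗ QY.delta) pB
        = TensorProduct.map (lTensor Y pD) pB ∘ₗ rTensor Y QY.delta from
      (LinearMap.map_comp_rTensor _ _ _ _).symm] at h1
    simp only [LinearMap.comp_apply] at h1
    have h2 := DFunLike.congr_fun e2p' (rTensor Y QY.delta (QY.delta z))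
    simp only [LinearMap.comp_apply] at h2
    have h3 := DFunLike.congr_fun (rTensor_comp_lTensor _ pD u) (QY.delta z)
    simp only [LinearMap.comp_apply] at h3
    rw [← h2, ← h1, h3]
  have E3e : ∀ z : Y, (TensorProduct.assoc F D B B).symm.toLinearMap
        (TensorProduct.map pD (TensorProduct.map pB pB) (lTensor Y QY.delta (QY.delta z)))
      = TensorProduct.map u pB (QY.delta z) := by
    intro z
    have h1 := DFunLike.congr_fun C3 z
    rw [show TensorProduct.map pD (rTensor Y pB ∘ₗ QY.delta)
        = TensorProduct.map pD (rTensor Y pB) ∘ₗ lTensor Y QY.delta from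
      (LinearMap.map_comp_lTensor _ _ _ _).symm] at h1
    simp only [LinearMap.comp_apply] at h1
    have h2 := DFunLike.congr_fun e3p (lTensor Y QY.delta (QY.delta z))
    simp only [LinearMap.comp_apply] at h2
    have h3 := DFunLike.congr_fun (lTensor_comp_rTensor _ u pB) (QY.delta z)
    simp only [LinearMap.comp_apply] at h3
    rw [← h2, ← h1, h3]
  have E3e' : ∀ z : Y, (TensorProduct.assoc F D B D).symm.toLinearMap
        (TensorProduct.map pD (TensorProduct.map pB pD) (lTensor Y QY.delta (QY.delta z)))
      = TensorProduct.map u pD (QY.delta z) := by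
    intro z
    have h1 := DFunLike.congr_fun C3 z
    rw [show TensorProduct.map pD (rTensor Y pB ∘ₗ QY.delta)
        = TensorProduct.map pD (rTensor Y pB) ∘ₗ lTensor Y QY.delta from
      (LinearMap.map_comp_lTensor _ _ _ _).symm] at h1
    simp only [LinearMap.comp_apply] at h1
    have h2 := DFunLike.congr_fun e3p' (lTensor Y QY.delta (QY.delta z))
    simp only [LinearMap.comp_apply] at h2
    have h3 := DFunLike.congr_fun (lTensor_comp_rTensor _ u pD) (QY.delta z)
    simp only [LinearMap.comp_apply] at h3
    rw [← h2, ← h1, h3]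
  -- remaining plumbing heads
  have S1h : rTensor D QB.delta ∘ₗ TensorProduct.map pB pD
      = TensorProduct.map (TensorProduct.map pB pB) pD ∘ₗ rTensor Y QY.delta := by
    rw [LinearMap.rTensor_comp_map, LinearMap.map_comp_rTensor, hmB.2.2.2]
  have R1h : lTensor D QB.delta ∘ₗ TensorProduct.map pD pB
      = TensorProduct.map pD (TensorProduct.map pB pB) ∘ₗ lTensor Y QY.delta := by
    rw [LinearMap.lTensor_comp_map, LinearMap.map_comp_lTensor, hmB.2.2.2]
  have S2h : lTensor B QD.delta ∘ₗ TensorProduct.map pB pD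
      = TensorProduct.map pB (TensorProduct.map pD pD) ∘ₗ lTensor Y QY.delta := by
    rw [LinearMap.lTensor_comp_map, LinearMap.map_comp_lTensor, hmD.2.2.2]
  have R2h : rTensor B QD.delta ∘ₗ TensorProduct.map pD pB
      = TensorProduct.map (TensorProduct.map pD pD) pB ∘ₗ rTensor Y QY.delta := by
    rw [LinearMap.rTensor_comp_map, LinearMap.map_comp_rTensor, hmD.2.2.2]
  have HLh : lTensor B (TensorProduct.map QB.lam QD.lam)
        ∘ₗ (TensorProduct.assoc F B B D).toLinearMap
        ∘ₗ TensorProduct.map (TensorProduct.map pB pB) pD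
      = (TensorProduct.assoc F B B D).toLinearMap
        ∘ₗ TensorProduct.map (TensorProduct.map pB (QB.lam ∘ₗ pB)) (QD.lam ∘ₗ pD) := by
    ext x y z; simp
  have HL2h : rTensor D (TensorProduct.map QB.lam QD.lam)
        ∘ₗ (TensorProduct.assoc F B D D).symm.toLinearMap
        ∘ₗ TensorProduct.map pB (TensorProduct.map pD pD)
      = (TensorProduct.assoc F B D D).symm.toLinearMap
        ∘ₗ TensorProduct.map (QB.lam ∘ₗ pB) (TensorProduct.map (QD.lam ∘ₗ pD) pD) := by
    ext x y z; simp
  have P1 : rTensor (B ⊗[F] D) pB ∘ₗ (TensorProduct.assoc F Y B D).toLinearMap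
        ∘ₗ TensorProduct.map (lTensor Y (QB.lam ∘ₗ pB)) (QD.lam ∘ₗ pD)
      = (TensorProduct.assoc F B B D).toLinearMap
        ∘ₗ TensorProduct.map (TensorProduct.map pB (QB.lam ∘ₗ pB)) (QD.lam ∘ₗ pD) := by
    ext x y z; simp
  have P2 : lTensor (B ⊗[F] D) pD ∘ₗ (TensorProduct.assoc F B D Y).symm.toLinearMap
        ∘ₗ TensorProduct.map (QB.lam ∘ₗ pB) (rTensor Y (QD.lam ∘ₗ pD))
      = (TensorProduct.assoc F B D D).symm.toLinearMap
        ∘ₗ TensorProduct.map (QB.lam ∘ₗ pB) (TensorProduct.map (QD.lam ∘ₗ pD) pD) := by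
    ext x y z; simp
  have E4e : ∀ z : Y, lTensor B (TensorProduct.map QB.lam QD.lam)
        (TensorProduct.map pB v (QY.delta z))
      = (TensorProduct.assoc F B B D).toLinearMap
        (TensorProduct.map (TensorProduct.map pB (QB.lam ∘ₗ pB)) (QD.lam ∘ₗ pD)
          (rTensor Y QY.delta (QY.delta z))) := by
    intro z
    have h1 := DFunLike.congr_fun C4 z
    rw [show TensorProduct.map (lTensor Y (QB.lam ∘ₗ pB) ∘ₗ QY.delta) (QD.lam ∘ₗ pD)
        = TensorProduct.map (lTensor Y (QB.lam ∘ₗ pB)) (QD.lam ∘ₗ pD) ∘ₗ rTensor Y QY.delta from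
      (LinearMap.map_comp_rTensor _ _ _ _).symm] at h1
    simp only [LinearMap.comp_apply] at h1
    have h2 := DFunLike.congr_fun P1 (rTensor Y QY.delta (QY.delta z))
    simp only [LinearMap.comp_apply] at h2
    have h3 := DFunLike.congr_fun
      (LinearMap.rTensor_comp_lTensor _ pB (TensorProduct.map QB.lam QD.lam ∘ₗ v)) (QY.delta z)
    simp only [LinearMap.comp_apply] at h3
    have h4 := DFunLike.congr_fun
      (LinearMap.lTensor_comp_map _ (TensorProduct.map QB.lam QD.lam) pB v) (QY.delta z)
    simp only [LinearMap.comp_apply] at h4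
    rw [h4, ← h3, h1, h2]
  have E5e : ∀ z : Y, rTensor D (TensorProduct.map QB.lam QD.lam)
        (TensorProduct.map v pD (QY.delta z))
      = (TensorProduct.assoc F B D D).symm.toLinearMap
        (TensorProduct.map (QB.lam ∘ₗ pB) (TensorProduct.map (QD.lam ∘ₗ pD) pD)
          (lTensor Y QY.delta (QY.delta z))) := by
    intro z
    have h1 := DFunLike.congr_fun C5 z
    rw [show TensorProduct.map (QB.lam ∘ₗ pB) (rTensor Y (QD.lam ∘ₗ pD) ∘ₗ QY.delta)
        = TensorProduct.map (QB.lam ∘ₗ pB) (rTensor Y (QD.lam ∘ₗ pD)) ∘ₗ lTensor Y QY.delta from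
      (LinearMap.map_comp_lTensor _ _ _ _).symm] at h1
    simp only [LinearMap.comp_apply] at h1
    have h2 := DFunLike.congr_fun P2 (lTensor Y QY.delta (QY.delta z))
    simp only [LinearMap.comp_apply] at h2
    have h3 := DFunLike.congr_fun
      (LinearMap.lTensor_comp_rTensor _ (TensorProduct.map QB.lam QD.lam ∘ₗ v) pD) (QY.delta z)
    simp only [LinearMap.comp_apply] at h3
    have h4 := DFunLike.congr_fun
      (LinearMap.rTensor_comp_map _ (TensorProduct.map QB.lam QD.lam) v pD) (QY.delta z)
    simp only [LinearMap.comp_apply] at h4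
    rw [h4, ← h3, h1, h2]
  -- counit plumbing
  have K1 : (TensorProduct.lid F D).toLinearMap ∘ₗ rTensor D QB.eps ∘ₗ TensorProduct.map pB pD
      = pD ∘ₗ (TensorProduct.lid F Y).toLinearMap ∘ₗ rTensor Y QY.eps := by
    ext a b
    have hε := DFunLike.congr_fun hmB.2.2.1 a
    simp only [LinearMap.comp_apply] at hε
    simp [hε]
  have K2 : (TensorProduct.rid F D).toLinearMap ∘ₗ lTensor D QB.eps ∘ₗ TensorProduct.map pD pB
      = pD ∘ₗ (TensorProduct.rid F Y).toLinearMap ∘ₗ lTensor Y QY.eps := by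
    ext a b
    have hε := DFunLike.congr_fun hmB.2.2.1 b
    simp only [LinearMap.comp_apply] at hε
    simp [hε]
  have K3 : (TensorProduct.rid F B).toLinearMap ∘ₗ lTensor B QD.eps ∘ₗ TensorProduct.map pB pD
      = pB ∘ₗ (TensorProduct.rid F Y).toLinearMap ∘ₗ lTensor Y QY.eps := by
    ext a b
    have hε := DFunLike.congr_fun hmD.2.2.1 b
    simp only [LinearMap.comp_apply] at hε
    simp [hε]
  have K4 : (TensorProduct.lid F B).toLinearMap ∘ₗ rTensor B QD.eps ∘ₗ TensorProduct.map pD pB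
      = pB ∘ₗ (TensorProduct.lid F Y).toLinearMap ∘ₗ rTensor Y QY.eps := by
    ext a b
    have hε := DFunLike.congr_fun hmD.2.2.1 a
    simp only [LinearMap.comp_apply] at hε
    simp [hε]
  -- naturality of the middle-four interchange
  have natD : TensorProduct.map (TensorProduct.map pD pD) (TensorProduct.map pB pB)
        ∘ₗ (TensorProduct.tensorTensorTensorComm F Y Y Y Y).toLinearMap
      = (TensorProduct.tensorTensorTensorComm F D B D B).toLinearMap
        ∘ₗ TensorProduct.map (TensorProduct.map pD pB) (TensorProduct.map pD pB) := by
    ext w x y z; simp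
  have natB : TensorProduct.map (TensorProduct.map pB pB) (TensorProduct.map pD pD)
        ∘ₗ (TensorProduct.tensorTensorTensorComm F Y Y Y Y).toLinearMap
      = (TensorProduct.tensorTensorTensorComm F B D B D).toLinearMap
        ∘ₗ TensorProduct.map (TensorProduct.map pB pD) (TensorProduct.map pB pD) := by
    ext w x y z; simp
  -- `u` and `v` are algebra maps
  have hu_mu : tensorMu F QD.mu QB.mu ∘ₗ TensorProduct.map u u = u ∘ₗ QY.mu := by
    rw [husplit, TensorProduct.map_comp, LinearMap.comp_assoc, QY.delta_mu]
    simp only [tensorMu]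
    simp only [← LinearMap.comp_assoc]
    congr 1
    rw [LinearMap.comp_assoc, ← natD, ← LinearMap.comp_assoc, ← TensorProduct.map_comp,
      ← hmD.2.1, ← hmB.2.1, TensorProduct.map_comp]
  have hv_mu : tensorMu F QB.mu QD.mu ∘ₗ TensorProduct.map v v = v ∘ₗ QY.mu := by
    rw [hvsplit, TensorProduct.map_comp, LinearMap.comp_assoc, QY.delta_mu]
    simp only [tensorMu]
    simp only [← LinearMap.comp_assoc]
    congr 1
    rw [LinearMap.comp_assoc, ← natB, ← LinearMap.comp_assoc, ← TensorProduct.map_comp,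
      ← hmB.2.1, ← hmD.2.1, TensorProduct.map_comp]
  -- `u` and `v` preserve the unit
  have hu_eta : u ∘ₗ QY.eta = tensorEta F QD.eta QB.eta := by
    rw [husplit, LinearMap.comp_assoc, QY.delta_eta]
    simp only [tensorEta]
    rw [← LinearMap.comp_assoc, ← TensorProduct.map_comp, hmD.1, hmB.1]
  have hv_eta : v ∘ₗ QY.eta = tensorEta F QB.eta QD.eta := by
    rw [hvsplit, LinearMap.comp_assoc, QY.delta_eta]
    simp only [tensorEta]
    rw [← LinearMap.comp_assoc, ← TensorProduct.map_comp, hmB.1, hmD.1]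
  -- elementwise basic facts
  have hOuy : ∀ z : Y, Ω (u z) = v z := by
    intro z
    have h := DFunLike.congr_fun hOu z
    simp only [LinearMap.comp_apply] at h
    exact h
  have huy : ∀ z : Y, u z = TensorProduct.map pD pB (QY.delta z) := by
    intro z
    have h := DFunLike.congr_fun husplit z
    simp only [LinearMap.comp_apply] at h
    exact h
  have hvy : ∀ z : Y, v z = TensorProduct.map pB pD (QY.delta z) := by
    intro z
    have h := DFunLike.congr_fun hvsplit z
    simp only [LinearMap.comp_apply] at h
    exact h
  refine ⟨⟨?_, ?_, ?_, ?_⟩, ?_, ?_⟩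
  · -- codistributive law, first identity
    apply comp_cancel_surj u hu
    ext y
    simp only [LinearMap.comp_apply]
    rw [hOuy y, hvy y, huy y]
    have s1 := DFunLike.congr_fun S1h (QY.delta y)
    simp only [LinearMap.comp_apply] at s1
    have hl := DFunLike.congr_fun HLh (rTensor Y QY.delta (QY.delta y))
    simp only [LinearMap.comp_apply] at hl
    have r1 := DFunLike.congr_fun R1h (QY.delta y)
    simp only [LinearMap.comp_apply] at r1
    have r3 := DFunLike.congr_fun (LinearMap.rTensor_comp_map _ Ω u pB) (QY.delta y)
    simp only [LinearMap.comp_apply] at r3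
    have hmv : TensorProduct.map v pB
        = TensorProduct.map (TensorProduct.map pB pD) pB ∘ₗ rTensor Y QY.delta := by
      rw [hvsplit]; exact (LinearMap.map_comp_rTensor _ _ _ _).symm
    have r5 := DFunLike.congr_fun hmv (QY.delta y)
    simp only [LinearMap.comp_apply] at r5
    have r6 := DFunLike.congr_fun (LinearMap.lTensor_comp_map _ Ω pB u) (QY.delta y)
    simp only [LinearMap.comp_apply] at r6
    rw [s1, hl, r1, E3e y, r3, hOu, r5, E2e y, r6, hOu, E4e y]
  · -- codistributive law, second identity
    apply comp_cancel_surj u hu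
    ext y
    simp only [LinearMap.comp_apply]
    rw [hOuy y, hvy y, huy y]
    have s2 := DFunLike.congr_fun S2h (QY.delta y)
    simp only [LinearMap.comp_apply] at s2
    have hl2 := DFunLike.congr_fun HL2h (lTensor Y QY.delta (QY.delta y))
    simp only [LinearMap.comp_apply] at hl2
    have r2 := DFunLike.congr_fun R2h (QY.delta y)
    simp only [LinearMap.comp_apply] at r2
    have r8 := DFunLike.congr_fun (LinearMap.rTensor_comp_map _ Ω u pD) (QY.delta y)
    simp only [LinearMap.comp_apply] at r8
    have hmv' : TensorProduct.map pD v
        = TensorProduct.map pD (TensorProduct.map pB pD) ∘ₗ lTensor Y QY.delta := by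
      rw [hvsplit]; exact (LinearMap.map_comp_lTensor _ _ _ _).symm
    have r7 := DFunLike.congr_fun hmv' (QY.delta y)
    simp only [LinearMap.comp_apply] at r7
    have r6' := DFunLike.congr_fun (LinearMap.lTensor_comp_map _ Ω pD u) (QY.delta y)
    simp only [LinearMap.comp_apply] at r6'
    rw [s2, hl2, r2, E2e' y, r6', hOu, r7, E3e' y, r8, hOu, E5e y]
  · -- counit identity for `QB.eps`
    apply comp_cancel_surj u hu
    ext y
    simp only [LinearMap.comp_apply]
    rw [hOuy y, hvy y, huy y]
    have k1 := DFunLike.congr_fun K1 (QY.delta y)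
    simp only [LinearMap.comp_apply] at k1
    have k2 := DFunLike.congr_fun K2 (QY.delta y)
    simp only [LinearMap.comp_apply] at k2
    have cl := DFunLike.congr_fun QY.counit_left y
    simp only [LinearMap.comp_apply, LinearMap.id_apply] at cl
    have cr := DFunLike.congr_fun QY.counit_right y
    simp only [LinearMap.comp_apply, LinearMap.id_apply] at cr
    rw [k1, cl, k2, cr]
  · -- counit identity for `QD.eps`
    apply comp_cancel_surj u hu
    ext y
    simp only [LinearMap.comp_apply]
    rw [hOuy y, hvy y, huy y]
    have k3 := DFunLike.congr_fun K3 (QY.delta y)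
    simp only [LinearMap.comp_apply] at k3
    have k4 := DFunLike.congr_fun K4 (QY.delta y)
    simp only [LinearMap.comp_apply] at k4
    have cl := DFunLike.congr_fun QY.counit_left y
    simp only [LinearMap.comp_apply, LinearMap.id_apply] at cl
    have cr := DFunLike.congr_fun QY.counit_right y
    simp only [LinearMap.comp_apply, LinearMap.id_apply] at cr
    rw [k3, cr, k4, cl]
  · -- monoidality: multiplicativity
    apply comp_cancel_surj (TensorProduct.map u u) (TensorProduct.map_surjective hu hu)
    simp only [LinearMap.comp_assoc]
    rw [hu_mu, ← TensorProduct.map_comp, hOu, hv_mu, ← LinearMap.comp_assoc, hOu]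
  · -- monoidality: unit
    rw [← hu_eta, ← LinearMap.comp_assoc, hOu, hv_eta]
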